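/- Let C_0 ⊆ C_1 ⊆ ... ⊆ C_{a-1} ⊆ C_a = (ZMod 2)^n be a family of nested binary linear codes. If for some i ∈ {0, ..., a-1} there exist c_1, c_2 ∈ C_i with c_1 ∗ c_2 ∉ C_{i+1}, then the vector 2^{i+1}·ψ(c_1 ∗ c_2) belongs to Λ_CF (the smallest additive subgroup containing Γ_CF) but does not belong to Γ_CF; in particular Γ_CF ⊊ Λ_CF. -/
import Mathlib

noncomputable section

/-- The natural embedding of `(ZMod 2)^n` into `ℤ^n`, applying coordinatewise the map
sending `0` to `0` and `1` to `1`. -/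
def psi {n : ℕ} (x : Fin n → ZMod 2) : Fin n → ℤ := fun k => ((x k).val : ℤ)

/-- The code formula set `Γ_CF = ψ(C₀) + 2ψ(C₁) + ... + 2^{a-1}ψ(C_{a-1}) + 2^a ℤ^n`
associated to a chain of binary codes `C₀ ⊆ C₁ ⊆ ... ⊆ C_a = (ZMod 2)^n`. -/
def GammaCF {n : ℕ} (a : ℕ) (C : ℕ → Submodule (ZMod 2) (Fin n → ZMod 2)) :
    Set (Fin n → ℤ) :=
  { x | ∃ (c : ℕ → Fin n → ZMod 2) (l : Fin n → ℤ),
      (∀ i < a, c i ∈ C i) ∧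
      x = (∑ i ∈ Finset.range a, (2 ^ i : ℤ) • psi (c i)) + (2 ^ a : ℤ) • l }

lemma psi_zero {n : ℕ} : psi (0 : Fin n → ZMod 2) = 0 := by
  funext k; simp [psi]

lemma mem_gammaCF_of_single {n a : ℕ} (C : ℕ → Submodule (ZMod 2) (Fin n → ZMod 2))
    (i : ℕ) (hi : i < a) (c : Fin n → ZMod 2) (hc : c ∈ C i) :
    (2 ^ i : ℤ) • psi c ∈ GammaCF a C := by
  refine ⟨fun j => if j = i then c else 0, 0, ?_, ?_⟩
  · intro j hj
    by_cases h : j = i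
    · subst h; simp [hc]
    · simp [h]
  · rw [Finset.sum_eq_single_of_mem i (Finset.mem_range.2 hi)]
    · simp
    · intro j _ hj
      simp [hj, psi_zero]

/-- digit extraction lemma -/
lemma digit_eq {a i : ℕ} (hia : i + 1 < a) (v : ℕ → ℤ)
    (hv : ∀ j, j < a → 0 ≤ v j ∧ v j ≤ 1) (t l : ℤ) (ht0 : 0 ≤ t) (ht1 : t ≤ 1)
    (heq : 2 ^ (i + 1) * t = (∑ j ∈ Finset.range a, 2 ^ j * v j) + 2 ^ a * l) :
    v (i + 1) = t := by
  have hsplit : (∑ j ∈ Finset.range a, (2:ℤ) ^ j * v j)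
      = (∑ j ∈ Finset.range (i+2), (2:ℤ) ^ j * v j)
        + ∑ j ∈ Finset.Ico (i+2) a, (2:ℤ) ^ j * v j :=
    (Finset.sum_range_add_sum_Ico _ (by omega)).symm
  rw [hsplit, Finset.sum_range_succ] at heq
  set A : ℤ := ∑ j ∈ Finset.range (i+1), (2:ℤ) ^ j * v j with hA
  have hA0 : 0 ≤ A := by
    apply Finset.sum_nonneg
    intro j hj
    have h0 := (hv j (by have := Finset.mem_range.1 hj; omega)).1
    positivity
  have hA1 : A ≤ 2 ^ (i+1) - 1 := by
    calc A ≤ ∑ j ∈ Finset.range (i+1), (2:ℤ) ^ j := by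
            apply Finset.sum_le_sum
            intro j hj
            have h2 := (hv j (by simp at hj; omega)).2
            nlinarith [pow_pos (by norm_num : (0:ℤ) < 2) j]
      _ = 2 ^ (i+1) - 1 := by
            induction (i+1) with
            | zero => simp
            | succ k ih => rw [Finset.sum_range_succ, ih]; ring
  -- the tail plus 2^a * l is divisible by 2^(i+2)
  have hdvdT : (2:ℤ) ^ (i+2) ∣ (∑ j ∈ Finset.Ico (i+2) a, (2:ℤ) ^ j * v j) + 2 ^ a * l := by
    apply dvd_add
    · apply Finset.dvd_sum
      intro j hj
      exact Dvd.dvd.mul_right (pow_dvd_pow 2 (Finset.mem_Ico.1 hj).1) _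
    · exact Dvd.dvd.mul_right (pow_dvd_pow 2 (by omega)) _
  obtain ⟨D, hD⟩ := hdvdT
  have heq2 : 2 ^ (i + 1) * t = A + 2 ^ (i+1) * v (i+1) + 2 ^ (i+2) * D := by
    linear_combination heq + hD
  have hdvdA : (2:ℤ) ^ (i+1) ∣ A := by
    have : A = 2 ^ (i+1) * t - 2 ^ (i+1) * v (i+1) - 2 ^ (i+1) * (2 * D) := by
      linear_combination -heq2
    rw [this]
    exact dvd_sub (dvd_sub (Dvd.intro _ rfl) (Dvd.intro _ rfl)) (Dvd.intro _ rfl)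
  obtain ⟨q, hq⟩ := hdvdA
  have hP : (0:ℤ) < 2 ^ (i+1) := by positivity
  have hq0 : q = 0 := by nlinarith [hq ▸ hA0, hq ▸ hA1]
  have hAzero : A = 0 := by rw [hq, hq0, mul_zero]
  rw [hAzero, zero_add] at heq2
  have hcancel : t = v (i+1) + 2 * D := by
    have h2 : (2:ℤ) ^ (i+1) * t = 2 ^ (i+1) * (v (i+1) + 2 * D) := by
      rw [heq2]; ring
    exact mul_left_cancel₀ (ne_of_gt hP) h2
  have hv1 := hv (i+1) hia
  omega

/-- If for some `i < a` there are `c₁, c₂ ∈ C_i` with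
`c₁ ∗ c₂ ∉ C_{i+1}`, then `2^{i+1} ψ(c₁ ∗ c₂)` lies in `Λ_CF` (the smallest additive
subgroup containing `Γ_CF`) but not in `Γ_CF`; in particular `Γ_CF ⊊ Λ_CF`. -/
theorem gammaCF_ssubset_of_not_schur {n a : ℕ}
    (C : ℕ → Submodule (ZMod 2) (Fin n → ZMod 2))
    (hmono : ∀ i < a, C i ≤ C (i + 1)) (htop : C a = ⊤)
    (i : ℕ) (hi : i < a) (c₁ c₂ : Fin n → ZMod 2)
    (h₁ : c₁ ∈ C i) (h₂ : c₂ ∈ C i) (hns : c₁ * c₂ ∉ C (i + 1)) :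
    (2 ^ (i + 1) : ℤ) • psi (c₁ * c₂) ∈ AddSubgroup.closure (GammaCF a C) ∧
    (2 ^ (i + 1) : ℤ) • psi (c₁ * c₂) ∉ GammaCF a C ∧
    GammaCF a C ⊂ (AddSubgroup.closure (GammaCF a C) : Set (Fin n → ℤ)) := by
  have hia : i + 1 < a := by
    rcases Nat.lt_or_ge (i+1) a with h | h
    · exact h
    · exfalso
      have : i + 1 = a := by omega
      apply hns
      rw [this, htop]
      trivial
  -- the key identity
  have hkey : (2 ^ (i + 1) : ℤ) • psi (c₁ * c₂)
      = (2 ^ i : ℤ) • psi c₁ + (2 ^ i : ℤ) • psi c₂ - (2 ^ i : ℤ) • psi (c₁ + c₂) := by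
    funext k
    have hzmod : ∀ x y : ZMod 2,
        ((x.val : ℤ) + y.val) = ((x+y).val : ℤ) + 2 * ((x*y).val : ℤ) := by decide
    have := hzmod (c₁ k) (c₂ k)
    simp only [psi, Pi.smul_apply, Pi.add_apply, Pi.sub_apply, smul_eq_mul, Pi.mul_apply,
      Pi.add_apply]
    linear_combination (-(2:ℤ)^i) * this
  have hmemclosure : (2 ^ (i + 1) : ℤ) • psi (c₁ * c₂) ∈ AddSubgroup.closure (GammaCF a C) := by
    rw [hkey]
    exact sub_mem
      (add_mem
        (AddSubgroup.subset_closure (mem_gammaCF_of_single C i hi c₁ h₁))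
        (AddSubgroup.subset_closure (mem_gammaCF_of_single C i hi c₂ h₂)))
      (AddSubgroup.subset_closure (mem_gammaCF_of_single C i hi _ (add_mem h₁ h₂)))
  have hnotmem : (2 ^ (i + 1) : ℤ) • psi (c₁ * c₂) ∉ GammaCF a C := by
    rintro ⟨c, l, hc, heq⟩
    apply hns
    have hcc : c (i+1) = c₁ * c₂ := by
      funext k
      have hk := congrFun heq k
      simp only [Pi.smul_apply, smul_eq_mul, Pi.add_apply, Finset.sum_apply] at hk
      have hdig := digit_eq hia (fun j => psi (c j) k)
        (fun j _ => ⟨by simp only [psi]; positivity, by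
          have := ZMod.val_lt ((c j) k)
          simp only [psi]
          omega⟩)
        (psi (c₁ * c₂) k) (l k)
        (by simp only [psi]; positivity)
        (by have := ZMod.val_lt ((c₁ * c₂) k); simp only [psi]; omega)
        hk
      have hvalinj : ∀ x y : ZMod 2, x.val = y.val → x = y := by decide
      apply hvalinj
      simp only [psi] at hdig
      exact_mod_cast hdig
    rw [← hcc]
    exact hc (i+1) hia
  refine ⟨hmemclosure, hnotmem, ?_, ?_⟩
  · exact AddSubgroup.subset_closure
  · intro hsub
    exact hnotmem (hsub hmemclosure)
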